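/- Let a, b ∈ ℝ_{++}ⁿ be strictly positive probability vectors, C ∈ ℝ₊^{n×n}, γ > 0, K := exp(−C/γ). Let (f_k, g_k, P_k) and the Greenkhorn update (f_{k+1}, g_{k+1}) be as follows: P_k := diag(e^{f_k/γ}) K diag(e^{g_k/γ}), I maximizes i ↦ ρ(a_i, (P_k𝟏ₙ)_i), J maximizes j ↦ ρ(b_j, (P_kᵀ𝟏ₙ)_j), and the single coordinate f_I (resp. g_J) is updated to exactly match the corresponding marginal, choosing the index with the larger ρ-value. If Σ_{i=1}^n ρ(a_i, (P_k𝟏ₙ)_i) > 1 or Σ_{j=1}^n ρ(b_j, (P_kᵀ𝟏ₙ)_j) > 1, then h(f_{k+1}, g_{k+1}) − h(f_k, g_k) ≥ γ/n. -/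

import Mathlib

/-- The dual entropic OT objective
`h(f,g) = ⟨f,a⟩ + ⟨g,b⟩ − γ Σ_{i,j} exp((f_i + g_j − C_{ij})/γ)`. -/
noncomputable def dualObj {n : ℕ} (a b : Fin n → ℝ) (C : Matrix (Fin n) (Fin n) ℝ)
    (γ : ℝ) (f g : Fin n → ℝ) : ℝ :=
  (∑ i, f i * a i) + (∑ j, g j * b j) -
    γ * ∑ i, ∑ j, Real.exp ((f i + g j - C i j) / γ)

/-- The transport plan `P = diag(e^{f/γ}) K diag(e^{g/γ})` with `K = exp(−C/γ)`. -/
noncomputable def plan {n : ℕ} (C : Matrix (Fin n) (Fin n) ℝ) (γ : ℝ)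
    (f g : Fin n → ℝ) : Matrix (Fin n) (Fin n) ℝ :=
  fun i j => Real.exp (f i / γ) * Real.exp (-C i j / γ) * Real.exp (g j / γ)

/-- The scalar Bregman divergence `ρ(x,y) = y − x + x log(x/y)`. -/
noncomputable def rho (x y : ℝ) : ℝ := y - x + x * Real.log (x / y)

lemma gain_f {n : ℕ} (a b : Fin n → ℝ) (C : Matrix (Fin n) (Fin n) ℝ)
    (γ : ℝ) (hγ : 0 < γ) (f g : Fin n → ℝ) (I : Fin n) (haI : 0 < a I) :
    dualObj a b C γ (Function.update f I
      (γ * Real.log (a I) - γ * Real.log (∑ j, Real.exp (-C I j / γ) * Real.exp (g j / γ)))) g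
      - dualObj a b C γ f g = γ * rho (a I) (∑ j, plan C γ f g I j) := by
  set S : ℝ := ∑ j, Real.exp (-C I j / γ) * Real.exp (g j / γ) with hSdef
  have hS : 0 < S := Finset.sum_pos (fun j _ => by positivity) ⟨I, Finset.mem_univ I⟩
  have key : ∀ x : ℝ, dualObj a b C γ (Function.update f I x) g - dualObj a b C γ f g
      = (x - f I) * a I - γ * ((Real.exp (x / γ) - Real.exp (f I / γ)) * S) := by
    intro x
    simp only [dualObj]
    have h1 : (∑ i, Function.update f I x i * a i) = (x - f I) * a I + ∑ i, f i * a i := by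
      rw [← Finset.add_sum_erase Finset.univ (fun i => Function.update f I x i * a i)
          (Finset.mem_univ I),
        ← Finset.add_sum_erase Finset.univ (fun i => f i * a i) (Finset.mem_univ I)]
      have he : (∑ i ∈ Finset.univ.erase I, Function.update f I x i * a i) =
          ∑ i ∈ Finset.univ.erase I, f i * a i :=
        Finset.sum_congr rfl fun i hi => by
          rw [Function.update_of_ne (Finset.ne_of_mem_erase hi)]
      rw [he, Function.update_self]
      ring
    have hrow : ∀ y : ℝ, (∑ j, Real.exp ((y + g j - C I j) / γ)) = Real.exp (y / γ) * S := by
      intro y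
      rw [hSdef, Finset.mul_sum]
      refine Finset.sum_congr rfl fun j _ => ?_
      rw [← mul_assoc, ← Real.exp_add, ← Real.exp_add]
      congr 1
      field_simp
      ring
    have h2 : (∑ i, ∑ j, Real.exp ((Function.update f I x i + g j - C i j) / γ))
        = (Real.exp (x / γ) - Real.exp (f I / γ)) * S
          + ∑ i, ∑ j, Real.exp ((f i + g j - C i j) / γ) := by
      rw [← Finset.add_sum_erase Finset.univ
          (fun i => ∑ j, Real.exp ((Function.update f I x i + g j - C i j) / γ))
          (Finset.mem_univ I),
        ← Finset.add_sum_erase Finset.univ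
          (fun i => ∑ j, Real.exp ((f i + g j - C i j) / γ)) (Finset.mem_univ I)]
      have he : (∑ i ∈ Finset.univ.erase I, ∑ j, Real.exp ((Function.update f I x i + g j - C i j) / γ)) =
          ∑ i ∈ Finset.univ.erase I, ∑ j, Real.exp ((f i + g j - C i j) / γ) :=
        Finset.sum_congr rfl fun i hi => by
          rw [Function.update_of_ne (Finset.ne_of_mem_erase hi)]
      rw [he]
      simp only [Function.update_self]
      rw [hrow x, hrow (f I)]
      ring
    rw [h1, h2]
    ring
  rw [key]
  set r : ℝ := ∑ j, plan C γ f g I j with hrdef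
  have hr : r = Real.exp (f I / γ) * S := by
    rw [hrdef, hSdef, Finset.mul_sum]
    refine Finset.sum_congr rfl fun j _ => ?_
    simp [plan]; ring
  have hr0 : 0 < r := by rw [hr]; positivity
  have hxS : Real.exp ((γ * Real.log (a I) - γ * Real.log S) / γ) * S = a I := by
    have h : (γ * Real.log (a I) - γ * Real.log S) / γ = Real.log (a I / S) := by
      rw [Real.log_div haI.ne' hS.ne']
      field_simp
    rw [h, Real.exp_log (div_pos haI hS)]
    field_simp
  have hlogr : Real.log r = f I / γ + Real.log S := by
    rw [hr, Real.log_mul (Real.exp_ne_zero _) hS.ne', Real.log_exp]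
  rw [rho, Real.log_div haI.ne' hr0.ne', hlogr]
  have hrS : Real.exp (f I / γ) * S = r := hr.symm
  have hcan : γ * (f I / γ) = f I := mul_div_cancel₀ _ hγ.ne'
  linear_combination γ * hrS - γ * hxS + a I * hcan

lemma dualObj_symm {n : ℕ} (a b : Fin n → ℝ) (C : Matrix (Fin n) (Fin n) ℝ)
    (γ : ℝ) (f g : Fin n → ℝ) :
    dualObj a b C γ f g = dualObj b a C.transpose γ g f := by
  simp only [dualObj, Matrix.transpose_apply]
  have h : (∑ i, ∑ j, Real.exp ((f i + g j - C i j) / γ))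
      = ∑ j, ∑ i, Real.exp ((g j + f i - C i j) / γ) := by
    rw [Finset.sum_comm]
    exact Finset.sum_congr rfl fun j _ => Finset.sum_congr rfl fun i _ => by ring_nf
  rw [h]
  ring

lemma plan_col {n : ℕ} (C : Matrix (Fin n) (Fin n) ℝ) (γ : ℝ) (f g : Fin n → ℝ) (J : Fin n) :
    (∑ i, plan C.transpose γ g f J i) = ∑ i, plan C γ f g i J := by
  refine Finset.sum_congr rfl fun i _ => ?_
  simp [plan, Matrix.transpose_apply]
  ring

/-- **One-iteration improvement of Greenkhorn, large-divergence regime**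
(Lemma 5/6 of Altschuler–Weed–Rigollet): if `Σ_i ρ(a_i,(P_k𝟏)_i) > 1` or
`Σ_j ρ(b_j,(P_kᵀ𝟏)_j) > 1`, then the Greenkhorn step satisfies
`h(f_{k+1},g_{k+1}) − h(f_k,g_k) ≥ γ/n`. -/
theorem greenkhorn_improvement_large {n : ℕ} (a b : Fin n → ℝ)
    (C : Matrix (Fin n) (Fin n) ℝ) (γ : ℝ) (hγ : 0 < γ)
    (ha0 : ∀ i, 0 < a i) (hb0 : ∀ j, 0 < b j)
    (ha1 : ∑ i, a i = 1) (hb1 : ∑ j, b j = 1)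
    (hC : ∀ i j, 0 ≤ C i j)
    (f g f' g' : Fin n → ℝ) (I J : Fin n)
    (hI : ∀ i, rho (a i) (∑ j, plan C γ f g i j) ≤ rho (a I) (∑ j, plan C γ f g I j))
    (hJ : ∀ j, rho (b j) (∑ i, plan C γ f g i j) ≤ rho (b J) (∑ i, plan C γ f g i J))
    (hupd₁ : rho (b J) (∑ i, plan C γ f g i J) < rho (a I) (∑ j, plan C γ f g I j) →
      f' = Function.update f I (γ * Real.log (a I) -
          γ * Real.log (∑ j, Real.exp (-C I j / γ) * Real.exp (g j / γ))) ∧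
      g' = g)
    (hupd₂ : ¬ (rho (b J) (∑ i, plan C γ f g i J) < rho (a I) (∑ j, plan C γ f g I j)) →
      f' = f ∧
      g' = Function.update g J (γ * Real.log (b J) -
          γ * Real.log (∑ i, Real.exp (-C i J / γ) * Real.exp (f i / γ))))
    (hlarge : 1 < ∑ i, rho (a i) (∑ j, plan C γ f g i j) ∨
      1 < ∑ j, rho (b j) (∑ i, plan C γ f g i j)) :
    γ / n ≤ dualObj a b C γ f' g' - dualObj a b C γ f g := by
  have hn : (0:ℝ) < n := by exact_mod_cast I.pos
  set ρI : ℝ := rho (a I) (∑ j, plan C γ f g I j) with hρI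
  set ρJ : ℝ := rho (b J) (∑ i, plan C γ f g i J) with hρJ
  -- the larger of the two divergences exceeds 1/n
  have hmax : 1 / (n:ℝ) < max ρI ρJ := by
    rcases hlarge with h | h
    · have hle : (∑ i, rho (a i) (∑ j, plan C γ f g i j)) ≤ n * ρI := by
        calc (∑ i, rho (a i) (∑ j, plan C γ f g i j))
            ≤ Finset.univ.card • ρI := Finset.sum_le_card_nsmul _ _ _ (fun i _ => hI i)
          _ = n * ρI := by simp [nsmul_eq_mul]
      have h1 : 1 < n * ρI := lt_of_lt_of_le h hle
      have : 1 / (n:ℝ) < ρI := by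
        rw [div_lt_iff₀ hn]; linarith [h1, mul_comm (n:ℝ) ρI]
      exact lt_of_lt_of_le this (le_max_left _ _)
    · have hle : (∑ j, rho (b j) (∑ i, plan C γ f g i j)) ≤ n * ρJ := by
        calc (∑ j, rho (b j) (∑ i, plan C γ f g i j))
            ≤ Finset.univ.card • ρJ := Finset.sum_le_card_nsmul _ _ _ (fun j _ => hJ j)
          _ = n * ρJ := by simp [nsmul_eq_mul]
      have h1 : 1 < n * ρJ := lt_of_lt_of_le h hle
      have : 1 / (n:ℝ) < ρJ := by
        rw [div_lt_iff₀ hn]; linarith [h1, mul_comm (n:ℝ) ρJ]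
      exact lt_of_lt_of_le this (le_max_right _ _)
  by_cases hc : ρJ < ρI
  · obtain ⟨hf', hg'⟩ := hupd₁ hc
    rw [hf', hg']
    rw [gain_f a b C γ hγ f g I (ha0 I)]
    have hIm : 1 / (n:ℝ) < ρI := by
      rw [max_eq_left hc.le] at hmax; exact hmax
    calc γ / n = γ * (1 / n) := by ring
      _ ≤ γ * ρI := by
          exact mul_le_mul_of_nonneg_left hIm.le hγ.le
  · obtain ⟨hf', hg'⟩ := hupd₂ hc
    rw [hf', hg']
    rw [dualObj_symm a b C γ f _, dualObj_symm a b C γ f g]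
    have hgain := gain_f b a C.transpose γ hγ g f J (hb0 J)
    simp only [Matrix.transpose_apply] at hgain
    rw [hgain, plan_col]
    push_neg at hc
    have hJm : 1 / (n:ℝ) < ρJ := by
      rw [max_eq_right hc] at hmax; exact hmax
    calc γ / n = γ * (1 / n) := by ring
      _ ≤ γ * ρJ := mul_le_mul_of_nonneg_left hJm.le hγ.le
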